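/- Let f be a probability generating function with mean f'(1) = m > 1 and infinite second factorial moment f''(1) = ∞. Then there exists a sequence of numbers p_n with 0 < p_n ≤ 1 such that (i) ∑_{n=1}^∞ ∏_{k=1}^n (m·p_k)^{-1} < ∞, and (ii) setting f_n(z) = f(1 − p_n + p_n z), the iterated compositions satisfy lim_{n→∞} (f_1 ∘ f_2 ∘ ⋯ ∘ f_n)(0) = 1. -/

import Mathlib

open Filter

/-- `pgfCompSeq f n` is the composition `f 0 ∘ f 1 ∘ ⋯ ∘ f (n-1)` (so the
first function `f 0` is outermost); it plays the role of `f_1 ∘ ⋯ ∘ f_n`. -/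
def pgfCompSeq (f : ℕ → ℝ → ℝ) : ℕ → ℝ → ℝ
  | 0 => id
  | n + 1 => fun z => pgfCompSeq f n (f n z)

open Finset

/-- auxiliary "slope" function `S(s) = ∑ q_j ∑_{i<j} (1-s)^i`, so that
`1 - f(1-s) = s * S(s)`. -/
noncomputable def pgfS (q : ℕ → ℝ) (s : ℝ) : ℝ :=
  ∑' j : ℕ, q j * ∑ i ∈ Finset.range j, (1 - s) ^ i

lemma sum_range_id_real (n : ℕ) :
    ∑ i ∈ Finset.range n, (i : ℝ) = n * (n - 1) / 2 := by
  induction n with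
  | zero => simp
  | succ k ih => rw [Finset.sum_range_succ, ih]; push_cast; ring

lemma one_sub_pow_eq (x : ℝ) (n : ℕ) :
    1 - x ^ n = (1 - x) * ∑ i ∈ Finset.range n, x ^ i := by
  linear_combination geom_sum_mul x n

lemma geo_bound {x : ℝ} (h0 : 0 ≤ x) (h1 : x < 1) (k : ℕ) :
    ∑ j ∈ Finset.range k, x ^ j ≤ (1 - x)⁻¹ := by
  have hx : (0:ℝ) < 1 - x := by linarith
  have h2 : ∑ j ∈ Finset.range k, x ^ j = (1 - x ^ k) / (1 - x) := by
    rw [geom_sum_eq (by intro h; rw [h] at h1; exact lt_irrefl 1 h1)]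
    rw [div_eq_div_iff (by intro h; nlinarith [h]) (ne_of_gt hx)]
    ring
  rw [h2, inv_eq_one_div]
  apply div_le_div₀ (by norm_num) (by nlinarith [pow_nonneg h0 k]) hx le_rfl

section pgf

variable {q : ℕ → ℝ} {m : ℝ}

lemma summable_pow_aux (hq : ∀ k, 0 ≤ q k) (hq1 : HasSum q 1) {x : ℝ}
    (h0 : 0 ≤ x) (h1 : x ≤ 1) : Summable (fun j : ℕ => q j * x ^ j) := by
  apply Summable.of_nonneg_of_le (fun j => mul_nonneg (hq j) (pow_nonneg h0 j))
    (fun j => mul_le_of_le_one_right (hq j) (pow_le_one₀ h0 h1)) hq1.summable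

lemma summable_S (hq : ∀ k, 0 ≤ q k)
    (hm : HasSum (fun k : ℕ => (k : ℝ) * q k) m) {s : ℝ}
    (h0 : 0 ≤ s) (h1 : s ≤ 1) :
    Summable (fun j : ℕ => q j * ∑ i ∈ Finset.range j, (1 - s) ^ i) := by
  apply Summable.of_nonneg_of_le
    (fun j => mul_nonneg (hq j)
      (Finset.sum_nonneg fun i _ => pow_nonneg (by linarith) i))
    (fun j => ?_) hm.summable
  have hb : ∑ i ∈ Finset.range j, (1 - s) ^ i ≤ (j : ℝ) := by
    calc ∑ i ∈ Finset.range j, (1 - s) ^ i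
        ≤ ∑ i ∈ Finset.range j, 1 :=
          Finset.sum_le_sum fun i _ => pow_le_one₀ (by linarith) (by linarith)
      _ = (j : ℝ) := by simp
  calc q j * ∑ i ∈ Finset.range j, (1 - s) ^ i ≤ q j * j :=
        mul_le_mul_of_nonneg_left hb (hq j)
    _ = (j : ℝ) * q j := mul_comm _ _

lemma pgfS_nonneg (hq : ∀ k, 0 ≤ q k) {s : ℝ} (h1 : s ≤ 1) : 0 ≤ pgfS q s :=
  tsum_nonneg fun j => mul_nonneg (hq j)
    (Finset.sum_nonneg fun i _ => pow_nonneg (by linarith) i)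

lemma pgfS_le_m (hq : ∀ k, 0 ≤ q k)
    (hm : HasSum (fun k : ℕ => (k : ℝ) * q k) m) {s : ℝ}
    (h0 : 0 ≤ s) (h1 : s ≤ 1) : pgfS q s ≤ m := by
  rw [← hm.tsum_eq]
  apply Summable.tsum_le_tsum _ (summable_S hq hm h0 h1) hm.summable
  intro j
  have hb : ∑ i ∈ Finset.range j, (1 - s) ^ i ≤ (j : ℝ) := by
    calc ∑ i ∈ Finset.range j, (1 - s) ^ i
        ≤ ∑ i ∈ Finset.range j, 1 :=
          Finset.sum_le_sum fun i _ => pow_le_one₀ (by linarith) (by linarith)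
      _ = (j : ℝ) := by simp
  calc q j * ∑ i ∈ Finset.range j, (1 - s) ^ i ≤ q j * j :=
        mul_le_mul_of_nonneg_left hb (hq j)
    _ = (j : ℝ) * q j := mul_comm _ _

lemma pgfS_antitone (hq : ∀ k, 0 ≤ q k)
    (hm : HasSum (fun k : ℕ => (k : ℝ) * q k) m) {s t : ℝ}
    (h0 : 0 ≤ s) (hst : s ≤ t) (h1 : t ≤ 1) : pgfS q t ≤ pgfS q s := by
  apply Summable.tsum_le_tsum _ (summable_S hq hm (le_trans h0 hst) h1)
    (summable_S hq hm h0 (le_trans hst h1))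
  intro j
  apply mul_le_mul_of_nonneg_left _ (hq j)
  apply Finset.sum_le_sum
  intro i _
  exact pow_le_pow_left₀ (by linarith) (by linarith) i

/-- Key identity : `f(1-s) = 1 - s S(s)`. -/
lemma fg_eq (hq : ∀ k, 0 ≤ q k) (hq1 : HasSum q 1)
    (hm : HasSum (fun k : ℕ => (k : ℝ) * q k) m) {s : ℝ}
    (h0 : 0 ≤ s) (h1 : s ≤ 1) :
    (∑' j : ℕ, q j * (1 - s) ^ j) = 1 - s * pgfS q s := by
  have hS := summable_S hq hm h0 h1
  have h2 : ∀ j : ℕ, q j * (1 - s) ^ j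
      = q j - s * (q j * ∑ i ∈ Finset.range j, (1 - s) ^ i) := by
    intro j
    have h3 := one_sub_pow_eq (1 - s) j
    have h4 : (1:ℝ) - (1 - s) = s := by ring
    rw [h4] at h3
    linear_combination (-(q j)) * h3
  calc (∑' j : ℕ, q j * (1 - s) ^ j)
      = ∑' j : ℕ, (q j - s * (q j * ∑ i ∈ Finset.range j, (1 - s) ^ i)) :=
        tsum_congr h2
    _ = (∑' j : ℕ, q j)
        - ∑' j : ℕ, s * (q j * ∑ i ∈ Finset.range j, (1 - s) ^ i) :=
        Summable.tsum_sub hq1.summable (hS.mul_left s)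
    _ = 1 - s * pgfS q s := by rw [hq1.tsum_eq, tsum_mul_left]; rfl

lemma fg_nonneg (hq : ∀ k, 0 ≤ q k) {x : ℝ} (h0 : 0 ≤ x) :
    0 ≤ ∑' j : ℕ, q j * x ^ j :=
  tsum_nonneg fun j => mul_nonneg (hq j) (pow_nonneg h0 j)

lemma fg_le_one (hq : ∀ k, 0 ≤ q k) (hq1 : HasSum q 1) {x : ℝ}
    (h0 : 0 ≤ x) (h1 : x ≤ 1) : (∑' j : ℕ, q j * x ^ j) ≤ 1 := by
  rw [show (1:ℝ) = ∑' j, q j from (hq1.tsum_eq).symm]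
  exact Summable.tsum_le_tsum
    (fun j => mul_le_of_le_one_right (hq j) (pow_le_one₀ h0 h1))
    (summable_pow_aux hq hq1 h0 h1) hq1.summable

end pgf

section pgf2

variable {q : ℕ → ℝ} {m : ℝ}

/-- Infinite second factorial moment: `m - S(s) ≥ C s` for `s` small. -/
lemma exists_s0 (hq : ∀ k, 0 ≤ q k) (hq1 : HasSum q 1)
    (hm : HasSum (fun k : ℕ => (k : ℝ) * q k) m)
    (hvar : ¬ Summable (fun k : ℕ => (k : ℝ) * ((k : ℝ) - 1) * q k)) (C : ℝ) :
    ∃ s0 : ℝ, 0 < s0 ∧ s0 ≤ 1 ∧ ∀ s, 0 < s → s ≤ s0 → C * s ≤ m - pgfS q s := by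
  rcases le_or_gt C 0 with hC | hC
  · refine ⟨1, one_pos, le_rfl, fun s hs hs1 => ?_⟩
    have := pgfS_le_m hq hm (le_of_lt hs) hs1
    nlinarith
  -- partial sums of `q j * T j` are unbounded
  have hT : ¬ Summable (fun j : ℕ => q j * ∑ i ∈ Finset.range j, (i : ℝ)) := by
    intro h
    apply hvar
    have h2 := h.mul_left 2
    apply h2.congr
    intro j
    rw [sum_range_id_real]
    ring
  have hnn : ∀ j : ℕ, 0 ≤ q j * ∑ i ∈ Finset.range j, (i : ℝ) :=
    fun j => mul_nonneg (hq j) (Finset.sum_nonneg fun i _ => by positivity)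
  have htend := (not_summable_iff_tendsto_nat_atTop_of_nonneg hnn).1 hT
  obtain ⟨J, hJ⟩ := (tendsto_atTop.1 htend (2 * C + 2)).exists
  refine ⟨min 1 (1 / (2 * J + 2)), by positivity, min_le_left _ _, ?_⟩
  intro s hs hs1
  have hsle1 : s ≤ 1 := le_trans hs1 (min_le_left _ _)
  have hsle2 : s ≤ 1 / (2 * J + 2) := le_trans hs1 (min_le_right _ _)
  have hJpos : (0:ℝ) < 2 * J + 2 := by positivity
  -- Bernoulli : (1-s)^J ≥ 1 - J s ≥ 1/2
  have hber : (1:ℝ) - J * s ≤ (1 - s) ^ J := by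
    have := one_add_mul_le_pow (a := -s) (by linarith) J
    calc (1:ℝ) - J * s = 1 + J * (-s) := by ring
      _ ≤ (1 + -s) ^ J := this
      _ = (1 - s) ^ J := by ring_nf
  have hhalf : (1:ℝ) / 2 ≤ (1 - s) ^ J := by
    have : (J:ℝ) * s ≤ J * (1 / (2 * J + 2)) :=
      mul_le_mul_of_nonneg_left hsle2 (Nat.cast_nonneg J)
    have h5 : (J:ℝ) * (1 / (2 * J + 2)) ≤ 1 / 2 := by
      rw [mul_one_div, div_le_div_iff₀ hJpos (by norm_num)]
      nlinarith [Nat.cast_nonneg (α := ℝ) J]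
    linarith
  -- m - S s  as a tsum
  have hmS : m - pgfS q s
      = ∑' j : ℕ, q j * ∑ i ∈ Finset.range j, (1 - (1 - s) ^ i) := by
    have hsum1 := summable_S hq hm (le_of_lt hs) hsle1
    have h6 : ∀ j : ℕ, q j * ∑ i ∈ Finset.range j, (1 - (1 - s) ^ i)
        = (j : ℝ) * q j - q j * ∑ i ∈ Finset.range j, (1 - s) ^ i := by
      intro j
      rw [Finset.sum_sub_distrib]
      simp only [Finset.sum_const, Finset.card_range, nsmul_eq_mul, mul_one]
      ring
    rw [show (∑' j : ℕ, q j * ∑ i ∈ Finset.range j, (1 - (1 - s) ^ i))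
        = ∑' j : ℕ, ((j : ℝ) * q j - q j * ∑ i ∈ Finset.range j, (1 - s) ^ i)
        from tsum_congr h6]
    rw [Summable.tsum_sub hm.summable hsum1, hm.tsum_eq]
    rfl
  -- lower bound by the finite partial sum up to J
  have hterm_nn : ∀ j : ℕ, 0 ≤ q j * ∑ i ∈ Finset.range j, (1 - (1 - s) ^ i) := by
    intro j
    apply mul_nonneg (hq j)
    apply Finset.sum_nonneg
    intro i _
    have := pow_le_one₀ (by linarith : (0:ℝ) ≤ 1 - s) (by linarith : (1:ℝ) - s ≤ 1) (n := i)
    linarith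
  have hsummable2 : Summable
      (fun j : ℕ => q j * ∑ i ∈ Finset.range j, (1 - (1 - s) ^ i)) := by
    have hsum1 := summable_S hq hm (le_of_lt hs) hsle1
    have := hm.summable.sub hsum1
    apply this.congr
    intro j
    rw [Finset.sum_sub_distrib]
    simp only [Finset.sum_const, Finset.card_range, nsmul_eq_mul, mul_one]
    ring
  have hpart : ∑ j ∈ Finset.range J, q j * ∑ i ∈ Finset.range j, (1 - (1 - s) ^ i)
      ≤ m - pgfS q s := by
    rw [hmS]
    exact Summable.sum_le_tsum _ (fun j _ => hterm_nn j) hsummable2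
  -- termwise : 1 - (1-s)^i ≥ i * s * (1-s)^J  for i ≤ J
  have hterm : ∀ j ∈ Finset.range J,
      s * (1 - s) ^ J * (q j * ∑ i ∈ Finset.range j, (i : ℝ))
        ≤ q j * ∑ i ∈ Finset.range j, (1 - (1 - s) ^ i) := by
    intro j hj
    rw [Finset.mem_range] at hj
    have key : ∀ i ∈ Finset.range j,
        s * (1 - s) ^ J * (i : ℝ) ≤ 1 - (1 - s) ^ i := by
      intro i hi
      rw [Finset.mem_range] at hi
      have hiJ : i ≤ J := by omega
      rw [one_sub_pow_eq (1 - s) i]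
      have h7 : (1:ℝ) - (1 - s) = s := by ring
      rw [h7]
      calc s * (1 - s) ^ J * (i:ℝ) = s * ((1 - s) ^ J * (i:ℝ)) := by ring
        _ ≤ s * ∑ l ∈ Finset.range i, (1 - s) ^ l := by
            apply mul_le_mul_of_nonneg_left _ (le_of_lt hs)
            calc (1 - s) ^ J * (i:ℝ) = ∑ l ∈ Finset.range i, (1 - s) ^ J := by
                  rw [Finset.sum_const, Finset.card_range, nsmul_eq_mul]; ring
              _ ≤ ∑ l ∈ Finset.range i, (1 - s) ^ l := by
                  apply Finset.sum_le_sum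
                  intro l hl
                  rw [Finset.mem_range] at hl
                  exact pow_le_pow_of_le_one (by linarith) (by linarith) (by omega)
    calc s * (1 - s) ^ J * (q j * ∑ i ∈ Finset.range j, (i : ℝ))
        = q j * ∑ i ∈ Finset.range j, s * (1 - s) ^ J * (i : ℝ) := by
          simp only [Finset.mul_sum]
          exact Finset.sum_congr rfl fun x _ => by ring
      _ ≤ q j * ∑ i ∈ Finset.range j, (1 - (1 - s) ^ i) :=
          mul_le_mul_of_nonneg_left (Finset.sum_le_sum key) (hq j)
  have hmain : s * (1 - s) ^ J * (2 * C + 2) ≤ m - pgfS q s := by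
    calc s * (1 - s) ^ J * (2 * C + 2)
        ≤ s * (1 - s) ^ J * (∑ j ∈ Finset.range J, q j * ∑ i ∈ Finset.range j, (i:ℝ)) := by
          apply mul_le_mul_of_nonneg_left hJ
          positivity
      _ = ∑ j ∈ Finset.range J, s * (1 - s) ^ J * (q j * ∑ i ∈ Finset.range j, (i:ℝ)) := by
          rw [Finset.mul_sum]
      _ ≤ ∑ j ∈ Finset.range J, q j * ∑ i ∈ Finset.range j, (1 - (1 - s) ^ i) :=
          Finset.sum_le_sum hterm
      _ ≤ m - pgfS q s := hpart
  nlinarith [hmain, hs, hC,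
    mul_le_mul_of_nonneg_right (mul_le_mul_of_nonneg_left hhalf hs.le)
      (by linarith : (0:ℝ) ≤ 2 * C + 2)]

end pgf2

section comp

lemma pgfCompSeq_expand (F : ℕ → ℝ → ℝ) (c : ℕ → ℝ) (hc : ∀ k, 0 ≤ c k)
    (hF : ∀ k z, 0 ≤ z → z ≤ 1 →
      0 ≤ F k z ∧ F k z ≤ 1 ∧ 1 - F k z ≤ c k * (1 - z)) :
    ∀ n z, 0 ≤ z → z ≤ 1 →
      0 ≤ pgfCompSeq F n z ∧ pgfCompSeq F n z ≤ 1 ∧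
        1 - pgfCompSeq F n z ≤ (∏ k ∈ Finset.range n, c k) * (1 - z) := by
  intro n
  induction n with
  | zero =>
    intro z h0 h1
    refine ⟨h0, h1, ?_⟩
    simp [pgfCompSeq]
  | succ n ih =>
    intro z h0 h1
    have h := hF n z h0 h1
    have h2 := ih (F n z) h.1 h.2.1
    refine ⟨h2.1, h2.2.1, ?_⟩
    have hpn : (0:ℝ) ≤ ∏ k ∈ Finset.range n, c k :=
      Finset.prod_nonneg fun k _ => hc k
    calc 1 - pgfCompSeq F (n + 1) z
        = 1 - pgfCompSeq F n (F n z) := rfl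
      _ ≤ (∏ k ∈ Finset.range n, c k) * (1 - F n z) := h2.2.2
      _ ≤ (∏ k ∈ Finset.range n, c k) * (c n * (1 - z)) :=
          mul_le_mul_of_nonneg_left h.2.2 hpn
      _ = (∏ k ∈ Finset.range (n + 1), c k) * (1 - z) := by
          rw [Finset.prod_range_succ]; ring

lemma pgfCompSeq_add (F : ℕ → ℝ → ℝ) (a : ℕ) :
    ∀ b z, pgfCompSeq F (a + b) z
      = pgfCompSeq F a (pgfCompSeq (fun k => F (a + k)) b z) := by
  intro b
  induction b with
  | zero => intro z; rfl
  | succ b ih =>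
    intro z
    calc pgfCompSeq F (a + (b + 1)) z
        = pgfCompSeq F (a + b) (F (a + b) z) := rfl
      _ = pgfCompSeq F a (pgfCompSeq (fun k => F (a + k)) b (F (a + b) z)) :=
          ih _
      _ = pgfCompSeq F a (pgfCompSeq (fun k => F (a + k)) (b + 1) z) := rfl

lemma pgfCompSeq_const (φ : ℝ → ℝ) (g : ℕ → ℝ → ℝ) :
    ∀ (b : ℕ), (∀ j, j < b → g j = φ) → ∀ z, pgfCompSeq g b z = φ^[b] z := by
  intro b
  induction b with
  | zero => intro _ z; rfl
  | succ b ih =>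
    intro hg z
    calc pgfCompSeq g (b + 1) z = pgfCompSeq g b (g b z) := rfl
      _ = φ^[b] (g b z) := ih (fun j hj => hg j (by omega)) _
      _ = φ^[b] (φ z) := by rw [hg b (by omega)]
      _ = φ^[b + 1] z := (Function.iterate_succ_apply φ b z).symm

end comp

section block

variable {q : ℕ → ℝ} {m : ℝ}

/-- Single block shrink estimate. -/
lemma block_shrink (hq : ∀ k, 0 ≤ q k) (hq1 : HasSum q 1)
    (hm : HasSum (fun k : ℕ => (k : ℝ) * q k) m) (hm1 : 1 < m)
    {ε η : ℝ} (hε0 : 0 < ε) (hε2 : ε ≤ 1 / 2) (hεm : ε ≤ (m - 1) / 2)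
    (hη0 : 0 < η) (hη1 : η ≤ 1)
    (hS : pgfS q (η / m) ≤ m - 2 * m * ε) :
    ∀ (j : ℕ) (z : ℝ), 0 ≤ z → z ≤ 1 →
      0 ≤ (fun y => ∑' i : ℕ, q i * (1 - (1 + ε) / m + (1 + ε) / m * y) ^ i)^[j] z ∧
      (fun y => ∑' i : ℕ, q i * (1 - (1 + ε) / m + (1 + ε) / m * y) ^ i)^[j] z ≤ 1 ∧
      1 - (fun y => ∑' i : ℕ, q i * (1 - (1 + ε) / m + (1 + ε) / m * y) ^ i)^[j] z
        ≤ max ((1 - ε) ^ j) ((1 + ε) * η) := by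
  have hm0 : (0:ℝ) < m := by linarith
  set P : ℝ := (1 + ε) / m with hP
  have hP0 : 0 < P := by positivity
  have hP1 : P ≤ 1 := by
    rw [hP, div_le_one hm0]; linarith
  set φ : ℝ → ℝ := fun y => ∑' i : ℕ, q i * (1 - P + P * y) ^ i with hφ
  -- single step bounds
  have hstep : ∀ y : ℝ, 0 ≤ y → y ≤ 1 →
      0 ≤ φ y ∧ φ y ≤ 1 ∧ 1 - φ y = P * (1 - y) * pgfS q (P * (1 - y)) := by
    intro y h0 h1
    have hx0 : 0 ≤ P * (1 - y) := mul_nonneg hP0.le (by linarith)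
    have hx1 : P * (1 - y) ≤ 1 := by nlinarith
    have harg : (1:ℝ) - P * (1 - y) = 1 - P + P * y := by ring
    have hid := fg_eq hq hq1 hm hx0 hx1
    rw [harg] at hid
    refine ⟨fg_nonneg hq (by linarith), fg_le_one hq hq1 (by linarith) (by linarith), ?_⟩
    rw [hφ]
    simp only
    rw [hid]
    ring
  intro j
  induction j with
  | zero =>
    intro z h0 h1
    refine ⟨h0, h1, ?_⟩
    simp
    left; linarith
  | succ j ih =>
    intro z h0 h1
    obtain ⟨hy0, hy1, hyb⟩ := ih z h0 h1
    set y : ℝ := φ^[j] z with hy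
    have hst := hstep y hy0 hy1
    rw [Function.iterate_succ_apply' φ j z, ← hy]
    refine ⟨hst.1, hst.2.1, ?_⟩
    have hSnn : 0 ≤ pgfS q (P * (1 - y)) := pgfS_nonneg hq (by nlinarith)
    rcases le_or_gt η (1 - y) with hcase | hcase
    · -- shrinking case
      have hge : η / m ≤ P * (1 - y) := by
        rw [hP, div_mul_eq_mul_div, div_le_div_iff₀ hm0 hm0]
        nlinarith [mul_le_mul_of_nonneg_right hcase hm0.le,
          mul_nonneg (mul_nonneg hε0.le (by linarith : (0:ℝ) ≤ 1 - y)) hm0.le]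
      have hSle : pgfS q (P * (1 - y)) ≤ m - 2 * m * ε := by
        apply le_trans (pgfS_antitone hq hm (le_of_lt (div_pos hη0 hm0)) hge
          (by nlinarith [hP0, hP1, hy0, hy1])) hS
      have hshrink : 1 - φ y ≤ (1 - ε) * (1 - y) := by
        rw [hst.2.2]
        calc P * (1 - y) * pgfS q (P * (1 - y))
            ≤ P * (1 - y) * (m - 2 * m * ε) := by
              apply mul_le_mul_of_nonneg_left hSle
                (mul_nonneg hP0.le (by linarith : (0:ℝ) ≤ 1 - y))
          _ = (1 + ε) * (1 - 2 * ε) * (1 - y) := by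
              rw [hP]; field_simp
          _ ≤ (1 - ε) * (1 - y) := by
              nlinarith [mul_nonneg (mul_nonneg hε0.le hε0.le)
                (by linarith : (0:ℝ) ≤ 1 - y)]
      calc 1 - φ y ≤ (1 - ε) * (1 - y) := hshrink
        _ ≤ (1 - ε) * max ((1 - ε) ^ j) ((1 + ε) * η) := by
            apply mul_le_mul_of_nonneg_left hyb (by linarith)
        _ ≤ max ((1 - ε) ^ (j + 1)) ((1 + ε) * η) := by
            rcases max_cases ((1 - ε) ^ j) ((1 + ε) * η) with ⟨hmx, _⟩ | ⟨hmx, _⟩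
            · rw [hmx]
              apply le_max_of_le_left
              rw [pow_succ]; exact le_of_eq (mul_comm _ _)
            · rw [hmx]
              apply le_max_of_le_right
              nlinarith
    · -- already small case
      have hSle : pgfS q (P * (1 - y)) ≤ m := pgfS_le_m hq hm
        (mul_nonneg hP0.le (by linarith)) (by nlinarith [hP0, hP1, hy0, hy1])
      have : 1 - φ y ≤ (1 + ε) * (1 - y) := by
        rw [hst.2.2]
        calc P * (1 - y) * pgfS q (P * (1 - y)) ≤ P * (1 - y) * m := by
              apply mul_le_mul_of_nonneg_left hSle
                (mul_nonneg hP0.le (by linarith))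
          _ = (1 + ε) * (1 - y) := by rw [hP]; field_simp
      apply le_max_of_le_right
      calc 1 - φ y ≤ (1 + ε) * (1 - y) := this
        _ ≤ (1 + ε) * η := mul_le_mul_of_nonneg_left (le_of_lt hcase) (by linarith)

end block

section seg

variable {q : ℕ → ℝ} {m : ℝ}

lemma seg_exists (hq : ∀ k, 0 ≤ q k) (hq1 : HasSum q 1)
    (hm : HasSum (fun k : ℕ => (k : ℝ) * q k) m) (hm1 : 1 < m)
    (hvar : ¬ Summable (fun k : ℕ => (k : ℝ) * ((k : ℝ) - 1) * q k)) :
    ∀ (r : ℕ) (E : ℝ), ∃ (k L : ℕ) (ε η : ℝ),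
      0 < ε ∧ ε ≤ 1 / 2 ∧ ε ≤ (m - 1) / 2 ∧ 0 < η ∧ η ≤ 1 ∧ 1 ≤ L ∧
      (1 - ε) ^ L ≤ η ∧
      (0 < E →
        pgfS q (η / m) ≤ m - 2 * m * ε ∧
        η * (E * m ^ k) ≤ ((2:ℝ) ^ r)⁻¹ ∧
        (2:ℝ) ^ r ≤ ε * (E * m ^ k)) := by
  intro r E
  have hm0 : (0:ℝ) < m := by linarith
  set c0 : ℝ := min (1 / 2) ((m - 1) / 2) with hc0
  have hc0pos : 0 < c0 := by
    apply lt_min (by norm_num) (by linarith)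
  rcases le_or_gt E 0 with hE | hE
  · -- degenerate case
    refine ⟨0, 1, c0, 1, hc0pos, min_le_left _ _, min_le_right _ _, one_pos,
      le_rfl, le_rfl, ?_, fun h => absurd h (not_lt.2 hE)⟩
    rw [pow_one]; linarith [hc0pos]
  -- main case
  set C : ℝ := 4 * m ^ 2 * 4 ^ r with hC
  obtain ⟨s0, hs0pos, hs01, hs0⟩ := exists_s0 hq hq1 hm hvar C
  set ηt : ℝ := min (m * s0) (c0 * ((4:ℝ) ^ r)⁻¹ / 2) with hηt
  have hηtpos : 0 < ηt := by
    apply lt_min (by positivity) (by positivity)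
  -- choose k with E * m^k large enough
  obtain ⟨k, hk⟩ := pow_unbounded_of_one_lt (((2:ℝ) ^ r)⁻¹ / ηt / E) hm1
  have hEm : ((2:ℝ) ^ r)⁻¹ / ηt ≤ E * m ^ k := by
    rw [div_lt_iff₀ hE] at hk
    linarith [hk]
  have hEmpos : (0:ℝ) < E * m ^ k := by positivity
  set η : ℝ := ((2:ℝ) ^ r)⁻¹ / (E * m ^ k) with hη
  have hηpos : 0 < η := by positivity
  have hηηt : η ≤ ηt := by
    rw [hη, div_le_iff₀ hEmpos]
    calc ((2:ℝ) ^ r)⁻¹ = (((2:ℝ) ^ r)⁻¹ / ηt) * ηt := by field_simp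
      _ ≤ (E * m ^ k) * ηt := mul_le_mul_of_nonneg_right hEm hηtpos.le
      _ = ηt * (E * m ^ k) := mul_comm _ _
  have hη1 : η ≤ 1 := by
    have : ηt ≤ c0 * ((4:ℝ) ^ r)⁻¹ / 2 := min_le_right _ _
    have h4 : ((4:ℝ) ^ r)⁻¹ ≤ 1 := by
      have h41 : (1:ℝ) ≤ 4 ^ r := one_le_pow₀ (by norm_num)
      rw [inv_le_one_iff₀]
      right
      exact h41
    have hc01 : c0 ≤ 1 / 2 := min_le_left _ _
    nlinarith [hc0pos]
  have hηm : η / m ≤ s0 := by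
    have : η ≤ m * s0 := le_trans hηηt (min_le_left _ _)
    rw [div_le_iff₀ hm0]
    linarith [this]
  have hSlow := hs0 (η / m) (by positivity) hηm
  -- so  m - S(η/m) ≥ C η / m = 4 m 4^r η
  have hgap : 4 * m * 4 ^ r * η ≤ m - pgfS q (η / m) := by
    calc 4 * m * 4 ^ r * η = C * (η / m) := by
          rw [hC]; field_simp
      _ ≤ m - pgfS q (η / m) := hSlow
  set ε : ℝ := min c0 ((m - pgfS q (η / m)) / (2 * m)) with hε
  have hεpos : 0 < ε := by
    apply lt_min hc0pos
    apply div_pos _ (by linarith)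
    have hpos : (0:ℝ) < 4 * m * 4 ^ r * η := by positivity
    linarith [hgap]
  have hεbound : 2 * (4:ℝ) ^ r * η ≤ ε := by
    apply le_min
    · have := hηηt.trans (min_le_right _ _)
      calc 2 * (4:ℝ) ^ r * η ≤ 2 * (4:ℝ) ^ r * (c0 * ((4:ℝ) ^ r)⁻¹ / 2) := by
            apply mul_le_mul_of_nonneg_left this (by positivity)
        _ = c0 := by field_simp
    · rw [le_div_iff₀ (by linarith : (0:ℝ) < 2 * m)]
      nlinarith [hgap]
  -- choose L
  obtain ⟨L0, hL0⟩ := exists_pow_lt_of_lt_one hηpos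
    (by linarith [hεpos] : 1 - ε < 1)
  refine ⟨k, max L0 1, ε, η, hεpos, (min_le_left _ _).trans (min_le_left _ _),
    (min_le_left _ _).trans (min_le_right _ _), hηpos, hη1,
    le_max_right _ _, ?_, fun _ => ⟨?_, ?_, ?_⟩⟩
  · have hεle : ε ≤ 1 / 2 := (min_le_left _ _).trans (min_le_left _ _)
    calc (1 - ε) ^ max L0 1 ≤ (1 - ε) ^ L0 :=
          pow_le_pow_of_le_one (by linarith) (by linarith) (le_max_left _ _)
      _ ≤ η := le_of_lt hL0
  · -- S condition
    have : ε ≤ (m - pgfS q (η / m)) / (2 * m) := min_le_right _ _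
    rw [le_div_iff₀ (by linarith : (0:ℝ) < 2 * m)] at this
    linarith
  · -- η * E' ≤ 2^{-r}
    rw [hη]
    exact le_of_eq (div_mul_cancel₀ _ (ne_of_gt hEmpos))
  · -- 2^r ≤ ε E'
    have h1 : 2 * (4:ℝ) ^ r * η * (E * m ^ k) ≤ ε * (E * m ^ k) :=
      mul_le_mul_of_nonneg_right hεbound hEmpos.le
    have h2 : η * (E * m ^ k) = ((2:ℝ) ^ r)⁻¹ := by
      rw [hη]; exact div_mul_cancel₀ _ (ne_of_gt hEmpos)
    have h3 : 2 * (4:ℝ) ^ r * η * (E * m ^ k) = 2 * (4:ℝ) ^ r * ((2:ℝ) ^ r)⁻¹ := by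
      rw [mul_assoc, h2]
    have h4 : (4:ℝ) ^ r = (2:ℝ) ^ r * (2:ℝ) ^ r := by
      rw [← mul_pow]; norm_num
    have h5 : 2 * (4:ℝ) ^ r * ((2:ℝ) ^ r)⁻¹ = 2 * (2:ℝ) ^ r := by
      rw [h4]; field_simp
    have h2r : (0:ℝ) < 2 ^ r := by positivity
    nlinarith [h1, h3.symm.trans (h5 ▸ h3), h2r]

end seg


/-- Let `f(z) = ∑ q_k z^k` be a probability generating function
with mean `m = f'(1) > 1` and infinite second factorial moment `f''(1) = ∞`.
Then there is a sequence `0 < p_n ≤ 1` such that the series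
`∑_n ∏_{k=1}^n (m p_k)⁻¹` converges, and, with `f_n(z) = f(1 - p_n + p_n z)`,
the iterated compositions satisfy `(f_1 ∘ ⋯ ∘ f_n)(0) → 1`. -/
theorem stmt1 (q : ℕ → ℝ) (hq : ∀ k, 0 ≤ q k) (hq1 : HasSum q 1)
    (m : ℝ) (hm : HasSum (fun k : ℕ => (k : ℝ) * q k) m) (hm1 : 1 < m)
    (hvar : ¬ Summable (fun k : ℕ => (k : ℝ) * ((k : ℝ) - 1) * q k)) :
    ∃ p : ℕ → ℝ, (∀ n, 0 < p n ∧ p n ≤ 1) ∧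
      Summable (fun n => (∏ k ∈ Finset.range (n + 1), (m * p k))⁻¹) ∧
      Tendsto
        (fun n => pgfCompSeq
          (fun k z => ∑' j : ℕ, q j * (1 - p k + p k * z) ^ j) n 0)
        atTop (nhds 1) := by
  have hm0 : (0:ℝ) < m := by linarith
  choose K Lf Eps Eta hp using seg_exists hq hq1 hm hm1 hvar
  -- the cumulated mean products `E r` at the start of segment `r`
  obtain ⟨E, hE0, hES⟩ : ∃ E : ℕ → ℝ, E 0 = 1 ∧ ∀ r, E (r + 1)
      = (E r * m ^ K r (E r)) * (1 + Eps r (E r)) ^ Lf r (E r) :=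
    ⟨fun r => Nat.rec 1
        (fun r Er => (Er * m ^ K r Er) * (1 + Eps r Er) ^ Lf r Er) r,
      rfl, fun _ => rfl⟩
  set kk : ℕ → ℕ := fun r => K r (E r) with hkk
  set LL : ℕ → ℕ := fun r => Lf r (E r) with hLL
  set εε : ℕ → ℝ := fun r => Eps r (E r) with hεε
  set ηη : ℕ → ℝ := fun r => Eta r (E r) with hηη
  have hε0 : ∀ r, 0 < εε r := fun r => (hp r (E r)).1
  have hε2 : ∀ r, εε r ≤ 1 / 2 := fun r => (hp r (E r)).2.1
  have hεm : ∀ r, εε r ≤ (m - 1) / 2 := fun r => (hp r (E r)).2.2.1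
  have hη0 : ∀ r, 0 < ηη r := fun r => (hp r (E r)).2.2.2.1
  have hη1 : ∀ r, ηη r ≤ 1 := fun r => (hp r (E r)).2.2.2.2.1
  have hL1 : ∀ r, 1 ≤ LL r := fun r => (hp r (E r)).2.2.2.2.2.1
  have hεL : ∀ r, (1 - εε r) ^ LL r ≤ ηη r := fun r => (hp r (E r)).2.2.2.2.2.2.1
  have hEpos : ∀ r, 0 < E r := by
    intro r
    induction r with
    | zero => rw [hE0]; norm_num
    | succ r ih =>
      rw [hES r]
      exact mul_pos (mul_pos ih (pow_pos hm0 _))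
        (pow_pos (by linarith [hε0 r]) _)
  have himp : ∀ r, pgfS q (ηη r / m) ≤ m - 2 * m * εε r ∧
      ηη r * (E r * m ^ kk r) ≤ ((2:ℝ) ^ r)⁻¹ ∧
      (2:ℝ) ^ r ≤ εε r * (E r * m ^ kk r) :=
    fun r => (hp r (E r)).2.2.2.2.2.2.2 (hEpos r)
  -- segment boundaries
  obtain ⟨N, hN0, hNS⟩ : ∃ N : ℕ → ℕ, N 0 = 0 ∧
      ∀ r, N (r + 1) = N r + kk r + LL r :=
    ⟨fun r => Nat.rec 0 (fun r n => n + kk r + LL r) r, rfl, fun _ => rfl⟩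
  have hNmono : StrictMono N := by
    apply strictMono_nat_of_lt_succ
    intro r
    rw [hNS r]
    have := hL1 r
    omega
  have hex : ∀ n : ℕ, ∃ r, n < N (r + 1) :=
    fun n => ⟨n, lt_of_le_of_lt hNmono.le_apply (hNmono (Nat.lt_succ_self n))⟩
  set R : ℕ → ℕ := fun n => Nat.find (hex n) with hR
  have hR1 : ∀ n, n < N (R n + 1) := fun n => Nat.find_spec (hex n)
  have hR2 : ∀ n, N (R n) ≤ n := by
    intro n
    rcases Nat.eq_zero_or_pos (R n) with h | h
    · rw [h, hN0]; exact Nat.zero_le n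
    · have h1 : R n - 1 < R n := by omega
      have := Nat.find_min (hex n) h1
      push_neg at this
      have h2 : R n - 1 + 1 = R n := by omega
      rwa [h2] at this
  have hRuniq : ∀ n r, N r ≤ n → n < N (r + 1) → R n = r := by
    intro n r h1 h2
    have hle : R n ≤ r := Nat.find_le h2
    by_contra hne
    have hlt : R n < r := by omega
    have : N (R n + 1) ≤ N r := hNmono.monotone (by omega)
    have := hR1 n
    omega
  -- the offspring fractions
  set p : ℕ → ℝ := fun n =>
    if n < N (R n) + kk (R n) then 1 else (1 + εε (R n)) / m with hpdef
  have hpval : ∀ r n, N r ≤ n → n < N (r + 1) →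
      p n = if n < N r + kk r then 1 else (1 + εε r) / m := by
    intro r n h1 h2
    rw [hpdef]
    simp only
    rw [hRuniq n r h1 h2]
  have hp01 : ∀ n, 0 < p n ∧ p n ≤ 1 := by
    intro n
    rw [hpdef]
    simp only
    split
    · exact ⟨one_pos, le_rfl⟩
    · constructor
      · apply div_pos (by linarith [hε0 (R n)]) hm0
      · rw [div_le_one hm0]
        linarith [hεm (R n)]
  -- values of p on segment r
  have hpboost : ∀ r j, j < kk r → p (N r + j) = 1 := by
    intro r j hj
    rw [hpval r (N r + j) (by omega) (by rw [hNS r]; omega)]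
    rw [if_pos (by omega)]
  have hpblock : ∀ r j, j < LL r → p (N r + kk r + j) = (1 + εε r) / m := by
    intro r j hj
    rw [hpval r (N r + kk r + j) (by omega) (by rw [hNS r]; omega)]
    rw [if_neg (by omega)]
  -- partial products
  have hprod_boost : ∀ r, (∏ i ∈ Finset.range (N r), (m * p i)) = E r →
      ∀ j, j ≤ kk r →
        (∏ i ∈ Finset.range (N r + j), (m * p i)) = E r * m ^ j := by
    intro r hbase j
    induction j with
    | zero => intro _; simpa using hbase
    | succ j ih =>
      intro hj
      rw [show N r + (j + 1) = (N r + j) + 1 from rfl, Finset.prod_range_succ,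
        ih (by omega), hpboost r j (by omega)]
      ring
  have hprod_block : ∀ r, (∏ i ∈ Finset.range (N r), (m * p i)) = E r →
      ∀ j, j ≤ LL r →
        (∏ i ∈ Finset.range (N r + kk r + j), (m * p i))
          = E r * m ^ kk r * (1 + εε r) ^ j := by
    intro r hbase j
    induction j with
    | zero =>
      intro _
      simpa using hprod_boost r hbase (kk r) le_rfl
    | succ j ih =>
      intro hj
      rw [show N r + kk r + (j + 1) = (N r + kk r + j) + 1 from rfl,
        Finset.prod_range_succ, ih (by omega), hpblock r j (by omega)]
      rw [pow_succ]
      field_simp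
  have hprodN : ∀ r, (∏ i ∈ Finset.range (N r), (m * p i)) = E r := by
    intro r
    induction r with
    | zero => rw [hN0, hE0]; simp
    | succ r ih =>
      rw [hNS r, show N r + kk r + LL r = N r + kk r + LL r from rfl]
      rw [hprod_block r ih (LL r) le_rfl, hES r]
  -- ===== summability =====
  have hppos : ∀ i : ℕ, (0:ℝ) < m * p i := fun i => mul_pos hm0 (hp01 i).1
  set a : ℕ → ℝ := fun n => (∏ k ∈ Finset.range (n + 1), (m * p k))⁻¹ with ha
  have hapos : ∀ n, 0 < a n := by
    intro n
    rw [ha]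
    simp only
    exact inv_pos.2 (Finset.prod_pos fun i _ => hppos i)
  have hE_lb : ∀ r, (2:ℝ) ^ r ≤ 2 * E r := by
    intro r
    induction r with
    | zero => rw [hE0]; norm_num
    | succ r _ =>
      have h1 := (himp r).2.2
      have hE'pos : (0:ℝ) < E r * m ^ kk r := mul_pos (hEpos r) (pow_pos hm0 _)
      have h2 : εε r * (E r * m ^ kk r) ≤ (1/2) * (E r * m ^ kk r) :=
        mul_le_mul_of_nonneg_right (hε2 r) hE'pos.le
      have h3 : (1:ℝ) ≤ (1 + εε r) ^ LL r := one_le_pow₀ (by linarith [hε0 r])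
      have h4 : E r * m ^ kk r ≤ E (r + 1) := by
        rw [hES r]
        nlinarith [mul_le_mul_of_nonneg_left h3 hE'pos.le]
      rw [pow_succ]
      linarith [h1, h2, h4, hEpos (r + 1)]
  have hEinv : ∀ r, (E r)⁻¹ ≤ 2 * ((2:ℝ) ^ r)⁻¹ := by
    intro r
    have h2r : (0:ℝ) < 2 ^ r := by positivity
    have heq : 2 * ((2:ℝ) ^ r)⁻¹ = ((2:ℝ) ^ r / 2)⁻¹ := by
      rw [inv_div]; ring
    rw [heq]
    apply inv_anti₀ (by positivity)
    linarith [hE_lb r]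
  have hboost_sum : ∀ r,
      ∑ j ∈ Finset.range (kk r), a (N r + j) ≤ (E r)⁻¹ * (m - 1)⁻¹ := by
    intro r
    have hEr := hEpos r
    have hstep : ∀ j ∈ Finset.range (kk r),
        a (N r + j) = (E r)⁻¹ * (m⁻¹) ^ (j + 1) := by
      intro j hj
      rw [Finset.mem_range] at hj
      rw [ha]
      simp only
      rw [show N r + j + 1 = N r + (j + 1) from rfl,
        hprod_boost r (hprodN r) (j + 1) (by omega), mul_inv, inv_pow]
    rw [Finset.sum_congr rfl hstep, ← Finset.mul_sum]
    apply mul_le_mul_of_nonneg_left _ (inv_nonneg.2 hEr.le)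
    have hminv0 : (0:ℝ) ≤ m⁻¹ := by positivity
    have hminv1 : m⁻¹ < 1 := by
      rw [inv_lt_one_iff₀]; right; exact hm1
    calc ∑ j ∈ Finset.range (kk r), (m⁻¹) ^ (j + 1)
        = m⁻¹ * ∑ j ∈ Finset.range (kk r), (m⁻¹) ^ j := by
          rw [Finset.mul_sum]
          exact Finset.sum_congr rfl fun j _ => by rw [pow_succ]; ring
      _ ≤ m⁻¹ * (1 - m⁻¹)⁻¹ :=
          mul_le_mul_of_nonneg_left (geo_bound hminv0 hminv1 _) hminv0
      _ = (m - 1)⁻¹ := by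
          rw [show (1:ℝ) - m⁻¹ = (m - 1) / m by field_simp, inv_div]
          field_simp
  have hblock_sum : ∀ r,
      ∑ j ∈ Finset.range (LL r), a (N r + kk r + j) ≤ ((2:ℝ) ^ r)⁻¹ := by
    intro r
    have hεr := hε0 r
    have hE'pos : (0:ℝ) < E r * m ^ kk r := mul_pos (hEpos r) (pow_pos hm0 _)
    have hstep : ∀ j ∈ Finset.range (LL r),
        a (N r + kk r + j) = (E r * m ^ kk r)⁻¹ * ((1 + εε r)⁻¹) ^ (j + 1) := by
      intro j hj
      rw [Finset.mem_range] at hj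
      rw [ha]
      simp only
      rw [show N r + kk r + j + 1 = N r + kk r + (j + 1) from rfl,
        hprod_block r (hprodN r) (j + 1) (by omega), mul_inv, inv_pow]
    rw [Finset.sum_congr rfl hstep, ← Finset.mul_sum]
    have hx0 : (0:ℝ) ≤ (1 + εε r)⁻¹ := by positivity
    have hx1 : (1 + εε r)⁻¹ < 1 := by
      rw [inv_lt_one_iff₀]; right; linarith
    have hgeo : ∑ j ∈ Finset.range (LL r), ((1 + εε r)⁻¹) ^ (j + 1)
        ≤ (εε r)⁻¹ := by
      calc ∑ j ∈ Finset.range (LL r), ((1 + εε r)⁻¹) ^ (j + 1)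
          = (1 + εε r)⁻¹ * ∑ j ∈ Finset.range (LL r), ((1 + εε r)⁻¹) ^ j := by
            rw [Finset.mul_sum]
            exact Finset.sum_congr rfl fun j _ => by rw [pow_succ]; ring
        _ ≤ (1 + εε r)⁻¹ * (1 - (1 + εε r)⁻¹)⁻¹ :=
            mul_le_mul_of_nonneg_left (geo_bound hx0 hx1 _) hx0
        _ = (εε r)⁻¹ := by
            rw [show (1:ℝ) - (1 + εε r)⁻¹ = εε r / (1 + εε r) by
              field_simp; ring, inv_div]
            field_simp
    calc (E r * m ^ kk r)⁻¹ * ∑ j ∈ Finset.range (LL r), ((1 + εε r)⁻¹) ^ (j + 1)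
        ≤ (E r * m ^ kk r)⁻¹ * (εε r)⁻¹ :=
          mul_le_mul_of_nonneg_left hgeo (by positivity)
      _ = (εε r * (E r * m ^ kk r))⁻¹ := by rw [mul_inv]; ring
      _ ≤ ((2:ℝ) ^ r)⁻¹ := by
          apply inv_anti₀ (by positivity)
          exact (himp r).2.2
  have hseg_split : ∀ r, ∑ i ∈ Finset.range (N (r + 1)), a i
      = ∑ i ∈ Finset.range (N r), a i
        + (∑ j ∈ Finset.range (kk r), a (N r + j)
          + ∑ j ∈ Finset.range (LL r), a (N r + kk r + j)) := by
    intro r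
    rw [hNS r, Finset.sum_range_add, Finset.sum_range_add]
    rw [add_assoc]
  have hcum : ∀ r, ∑ i ∈ Finset.range (N r), a i
      ≤ ∑ t ∈ Finset.range r, ((E t)⁻¹ * (m - 1)⁻¹ + ((2:ℝ) ^ t)⁻¹) := by
    intro r
    induction r with
    | zero => rw [hN0]; simp
    | succ r ih =>
      rw [hseg_split r, Finset.sum_range_succ]
      have := hboost_sum r
      have := hblock_sum r
      linarith
  have hm1inv : (0:ℝ) ≤ (m - 1)⁻¹ := by
    apply inv_nonneg.2; linarith
  have hbound : ∀ r, ∑ i ∈ Finset.range (N r), a i ≤ (2 * (m - 1)⁻¹ + 1) * 2 := by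
    intro r
    have h1 : ∀ t ∈ Finset.range r, (E t)⁻¹ * (m - 1)⁻¹ + ((2:ℝ) ^ t)⁻¹
        ≤ (2 * (m - 1)⁻¹ + 1) * ((2:ℝ)⁻¹) ^ t := by
      intro t _
      have h2 := hEinv t
      have h3 : ((2:ℝ) ^ t)⁻¹ = ((2:ℝ)⁻¹) ^ t := by rw [inv_pow]
      have h4 : (0:ℝ) < ((2:ℝ) ^ t)⁻¹ := by positivity
      have h5 : (E t)⁻¹ * (m - 1)⁻¹ ≤ 2 * ((2:ℝ) ^ t)⁻¹ * (m - 1)⁻¹ :=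
        mul_le_mul_of_nonneg_right h2 hm1inv
      rw [← h3]
      nlinarith [h4, h5]
    calc ∑ i ∈ Finset.range (N r), a i
        ≤ ∑ t ∈ Finset.range r, ((E t)⁻¹ * (m - 1)⁻¹ + ((2:ℝ) ^ t)⁻¹) := hcum r
      _ ≤ ∑ t ∈ Finset.range r, (2 * (m - 1)⁻¹ + 1) * ((2:ℝ)⁻¹) ^ t :=
          Finset.sum_le_sum h1
      _ = (2 * (m - 1)⁻¹ + 1) * ∑ t ∈ Finset.range r, ((2:ℝ)⁻¹) ^ t := by
          rw [Finset.mul_sum]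
      _ ≤ (2 * (m - 1)⁻¹ + 1) * 2 := by
          apply mul_le_mul_of_nonneg_left _ (by linarith)
          calc ∑ t ∈ Finset.range r, ((2:ℝ)⁻¹) ^ t
              ≤ (1 - (2:ℝ)⁻¹)⁻¹ := geo_bound (by norm_num) (by norm_num) _
            _ = 2 := by norm_num
  have hsummable : Summable a := by
    apply summable_of_sum_range_le (fun n => (hapos n).le)
    intro n
    calc ∑ i ∈ Finset.range n, a i ≤ ∑ i ∈ Finset.range (N n), a i := by
          apply Finset.sum_le_sum_of_subset_of_nonneg
            (Finset.range_subset_range.2 hNmono.le_apply)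
          intro i _ _
          exact (hapos i).le
      _ ≤ (2 * (m - 1)⁻¹ + 1) * 2 := hbound n
  -- ===== convergence =====
  set F : ℕ → ℝ → ℝ :=
    fun k z => ∑' j : ℕ, q j * (1 - p k + p k * z) ^ j with hF
  have hF3 : ∀ k z, 0 ≤ z → z ≤ 1 →
      0 ≤ F k z ∧ F k z ≤ 1 ∧ 1 - F k z ≤ (m * p k) * (1 - z) := by
    intro k z h0 h1
    obtain ⟨hpk0, hpk1⟩ := hp01 k
    have hs0 : 0 ≤ p k * (1 - z) := mul_nonneg hpk0.le (by linarith)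
    have hs1 : p k * (1 - z) ≤ 1 := by nlinarith
    have harg : 1 - p k * (1 - z) = 1 - p k + p k * z := by ring
    have hid := fg_eq hq hq1 hm hs0 hs1
    rw [harg] at hid
    rw [hF]
    simp only
    refine ⟨fg_nonneg hq (by nlinarith), fg_le_one hq hq1 (by nlinarith) (by nlinarith), ?_⟩
    rw [hid]
    calc 1 - (1 - p k * (1 - z) * pgfS q (p k * (1 - z)))
        = p k * (1 - z) * pgfS q (p k * (1 - z)) := by ring
      _ ≤ p k * (1 - z) * m :=
          mul_le_mul_of_nonneg_left (pgfS_le_m hq hm hs0 hs1) hs0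
      _ = (m * p k) * (1 - z) := by ring
  have hconv : ∀ r n, N (r + 1) ≤ n →
      1 - pgfCompSeq F n 0 ≤ 2 * ((2:ℝ) ^ r)⁻¹ ∧ pgfCompSeq F n 0 ≤ 1 := by
    intro r n hn
    have hdecomp : n = (N r + kk r) + (LL r + (n - N (r + 1))) := by
      have := hNS r
      omega
    have hxmem := pgfCompSeq_expand
        (fun j => F ((N r + kk r) + (LL r + j)))
        (fun j => m * p ((N r + kk r) + (LL r + j)))
        (fun j => (hppos _).le) (fun j z h0 h1 => hF3 _ z h0 h1)
        (n - N (r + 1)) 0 le_rfl zero_le_one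
    have hblockc : ∀ j, j < LL r → (fun k => F ((N r + kk r) + k)) j
        = fun y => ∑' i : ℕ,
            q i * (1 - (1 + εε r) / m + (1 + εε r) / m * y) ^ i := by
      intro j hj
      rw [hF]
      simp only
      funext z
      rw [show (N r + kk r) + j = N r + kk r + j from rfl, hpblock r j hj]
    have hiter := pgfCompSeq_const
        (fun y => ∑' i : ℕ, q i * (1 - (1 + εε r) / m + (1 + εε r) / m * y) ^ i)
        (fun k => F ((N r + kk r) + k)) (LL r) hblockc
        (pgfCompSeq (fun j => F ((N r + kk r) + (LL r + j))) (n - N (r + 1)) 0)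
    have hbs := block_shrink hq hq1 hm hm1 (hε0 r) (hε2 r) (hεm r) (hη0 r)
        (hη1 r) (himp r).1 (LL r)
        (pgfCompSeq (fun j => F ((N r + kk r) + (LL r + j))) (n - N (r + 1)) 0)
        hxmem.1 hxmem.2.1
    set y : ℝ := (fun y => ∑' i : ℕ,
        q i * (1 - (1 + εε r) / m + (1 + εε r) / m * y) ^ i)^[LL r]
        (pgfCompSeq (fun j => F ((N r + kk r) + (LL r + j))) (n - N (r + 1)) 0)
      with hy
    have hymax : 1 - y ≤ 2 * ηη r := by
      have h1 : (1 - εε r) ^ LL r ≤ (1 + εε r) * ηη r := by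
        nlinarith [hεL r, hε0 r, hη0 r]
      have h2 := hbs.2.2
      rw [max_eq_right h1] at h2
      nlinarith [hε2 r, hη0 r, h2]
    have hout := pgfCompSeq_expand F (fun k => m * p k) (fun k => (hppos k).le)
        (fun k z h0 h1 => hF3 k z h0 h1) (N r + kk r) y hbs.1 hbs.2.1
    have hprodA : (∏ k ∈ Finset.range (N r + kk r), (m * p k))
        = E r * m ^ kk r :=
      hprod_boost r (hprodN r) (kk r) le_rfl
    have hsplit : pgfCompSeq F n 0 = pgfCompSeq F (N r + kk r) y := by
      conv_lhs => rw [hdecomp]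
      rw [pgfCompSeq_add F (N r + kk r) (LL r + (n - N (r + 1))) 0]
      rw [pgfCompSeq_add (fun k => F ((N r + kk r) + k)) (LL r) (n - N (r + 1)) 0]
      congr 1
    constructor
    · rw [hsplit]
      have hE'nn : (0:ℝ) ≤ E r * m ^ kk r :=
        (mul_pos (hEpos r) (pow_pos hm0 _)).le
      calc 1 - pgfCompSeq F (N r + kk r) y
          ≤ (∏ k ∈ Finset.range (N r + kk r), (m * p k)) * (1 - y) := hout.2.2
        _ = (E r * m ^ kk r) * (1 - y) := by rw [hprodA]
        _ ≤ (E r * m ^ kk r) * (2 * ηη r) :=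
            mul_le_mul_of_nonneg_left hymax hE'nn
        _ = 2 * (ηη r * (E r * m ^ kk r)) := by ring
        _ ≤ 2 * ((2:ℝ) ^ r)⁻¹ := by linarith [(himp r).2.1]
    · rw [hsplit]
      exact hout.2.1
  refine ⟨p, hp01, hsummable, ?_⟩
  rw [show (fun n => pgfCompSeq
      (fun k z => ∑' j : ℕ, q j * (1 - p k + p k * z) ^ j) n 0)
      = fun n => pgfCompSeq F n 0 from rfl]
  rw [Metric.tendsto_atTop]
  intro δ hδ
  obtain ⟨r, hr⟩ := pow_unbounded_of_one_lt (2 / δ) (by norm_num : (1:ℝ) < 2)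
  refine ⟨N (r + 1), fun n hn => ?_⟩
  have h := hconv r n hn
  have h2r : (0:ℝ) < 2 ^ r := by positivity
  have hlt : 2 * ((2:ℝ) ^ r)⁻¹ < δ := by
    rw [div_lt_iff₀ hδ] at hr
    rw [show 2 * ((2:ℝ) ^ r)⁻¹ = 2 / 2 ^ r by rw [div_eq_mul_inv]]
    rw [div_lt_iff₀ h2r]
    nlinarith [hr]
  rw [Real.dist_eq, abs_sub_comm, abs_of_nonneg (by linarith [h.2])]
  linarith [h.1]
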